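/- If a branch node c is irrelevant (all walks leaving c rejoin at a unique successor without passing through any event node), then for any entry-to-exit walk through c and any alternative branch choice at c, there exists another entry-to-exit walk with the same event trace taking that alternative branch. -/

import Mathlib

/-- `l` is a walk from `a` to `b` in the directed graph with edge relation `E`. -/
def IsWalkFromTo {V : Type*} (E : V → V → Prop) (a b : V) (l : List V) : Prop :=
  l ≠ [] ∧ l.head? = some a ∧ l.getLast? = some b ∧ l.Chain' E

lemma head?_append_left {V : Type*} {l l' : List V} {a : V} (h : l.head? = some a) :
    (l ++ l').head? = some a := by
  rw [List.head?_append, h]; rfl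

lemma getLast?_append_right {V : Type*} {l l' : List V} {b : V} (h : l'.getLast? = some b) :
    (l ++ l').getLast? = some b := by
  rw [List.getLast?_append, h]; rfl

lemma mem_of_getLast?_eq {V : Type*} {l : List V} {b : V} (h : l.getLast? = some b) :
    b ∈ l := by
  obtain ⟨hne, rfl⟩ := List.mem_getLast?_eq_getLast (by rw [h]; rfl)
  exact List.getLast_mem hne

/-- From reflexive-transitive reachability we can extract a concrete walk. -/
lemma exists_walk_of_rtg {V : Type*} (E : V → V → Prop) {a b : V}
    (h : Relation.ReflTransGen E a b) :
    ∃ l : List V, l ≠ [] ∧ l.head? = some a ∧ l.getLast? = some b ∧ l.Chain' E := by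
  induction h with
  | refl => exact ⟨[a], by simp [List.Chain']⟩
  | @tail b' c hab hbc ih =>
    obtain ⟨l, hne, hh, hl, hc⟩ := ih
    refine ⟨l ++ [c], by simp, head?_append_left hh, getLast?_append_right (by simp), ?_⟩
    unfold List.Chain'; rw [List.isChain_append]
    refine ⟨hc, List.isChain_singleton c, ?_⟩
    intro u hu y hy
    simp only [List.head?_cons, Option.mem_def, Option.some.injEq] at hy
    subst hy
    rw [Option.mem_def, hl] at hu
    cases hu
    exact hbc

/-- A chain starting in `S` and ending outside `S` splits at its first exit,
which must be `m`. -/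
lemma exit_split {V : Type*} (E : V → V → Prop) (S : Set V) (m : V)
    (hleave : ∀ u ∈ S, ∀ v, v ∉ S → E u v → v = m)
    (l : List V) (hne : l ≠ [])
    (hh : ∀ a ∈ l.head?, a ∈ S) (hlast : ∀ b ∈ l.getLast?, b ∉ S)
    (hc : l.Chain' E) :
    ∃ P rest, l = P ++ m :: rest ∧ P ≠ [] ∧ (∀ p ∈ P, p ∈ S) ∧
      (∀ u ∈ P.getLast?, E u m) := by
  classical
  let p : V → Bool := fun v => decide (v ∈ S)
  have hPS : ∀ q ∈ l.takeWhile p, q ∈ S := fun q hq => by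
    have := List.mem_takeWhile_imp hq
    simpa [p] using this
  have hRne : l.dropWhile p ≠ [] := by
    intro h0
    have hall : ∀ x ∈ l, p x = true := List.dropWhile_eq_nil_iff.mp h0
    obtain ⟨b, hb⟩ := Option.isSome_iff_exists.mp (List.getLast?_isSome.mpr hne)
    have hbl : b ∈ l := mem_of_getLast?_eq hb
    exact hlast b (by rw [hb]; rfl) (by simpa [p] using hall b hbl)
  obtain ⟨v, R', hR'⟩ := List.exists_cons_of_ne_nil hRne
  have hsplit : l.takeWhile p ++ v :: R' = l := by
    rw [← hR']; exact List.takeWhile_append_dropWhile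
  have hvS : v ∉ S := by
    have hhd := List.head?_dropWhile_not p l
    rw [hR'] at hhd
    simp only [List.head?_cons] at hhd
    intro hvS'
    exact absurd (by simpa [p] using hvS' : p v = true) (by simp [hhd])
  have hPne : l.takeWhile p ≠ [] := by
    intro h0
    rw [h0, List.nil_append] at hsplit
    have : l.head? = some v := by rw [← hsplit]; rfl
    exact hvS (hh v (by rw [this]; rfl))
  have hchain : List.Chain' E (l.takeWhile p ++ v :: R') := by rw [hsplit]; exact hc
  unfold List.Chain' at hchain; rw [List.isChain_append] at hchain
  obtain ⟨-, -, hbd⟩ := hchain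
  have hEv : ∀ u ∈ (l.takeWhile p).getLast?, E u v := fun u hu => hbd u hu v (by simp)
  obtain ⟨u, hu⟩ := Option.isSome_iff_exists.mp (List.getLast?_isSome.mpr hPne)
  have huS : u ∈ S := hPS u (mem_of_getLast?_eq hu)
  have hvm : v = m := hleave u huS v hvS (hEv u (by rw [hu]; rfl))
  subst hvm
  exact ⟨l.takeWhile p, R', hsplit.symm, hPne, hPS, hEv⟩

/-- If `c` is an irrelevant branch node (witnessed by a subgraph `S` containing `c`
and all out-edges of `c`, containing no event node, with unique successor `m`),
then for any entry-to-exit walk `W` through `c` and any out-edge `(c,x)`, there is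
an entry-to-exit walk with the same event trace that takes the edge `(c,x)`. -/
theorem stmt10 {V : Type*} [DecidableEq V] (E : V → V → Prop)
    (Ev : Set V) [DecidablePred (· ∈ Ev)] (top bot : V) (S : Set V) (c m : V)
    (hcS : c ∈ S) (hcEv : c ∉ Ev)
    (hout : ∀ x, E c x → x ∈ S)
    (hSEv : ∀ x ∈ S, x ∉ Ev)
    (hmS : m ∉ S)
    (hleave : ∀ u ∈ S, ∀ v, v ∉ S → E u v → v = m)
    (htopS : top ∉ S) (hbotS : bot ∉ S)
    (hreach : ∀ v, Relation.ReflTransGen E v bot) :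
    ∀ W, IsWalkFromTo E top bot W → c ∈ W → ∀ x, E c x →
      ∃ W', IsWalkFromTo E top bot W' ∧
        W'.filter (fun v => decide (v ∈ Ev ∨ v = top ∨ v = bot)) =
          W.filter (fun v => decide (v ∈ Ev ∨ v = top ∨ v = bot)) ∧
        ∃ a b, W' = a ++ c :: x :: b := by
  classical
  intro W hW hcW x hEcx
  obtain ⟨hWne, hWh, hWl, hWc⟩ := hW
  have hprS : ∀ v ∈ S, (fun v => decide (v ∈ Ev ∨ v = top ∨ v = bot)) v = false := by
    intro v hv
    have h1 : v ∉ Ev := hSEv v hv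
    have h2 : v ≠ top := fun h => htopS (h ▸ hv)
    have h3 : v ≠ bot := fun h => hbotS (h ▸ hv)
    simp [h1, h2, h3]
  obtain ⟨a, t, rfl⟩ := List.append_of_mem hcW
  have ha : a ≠ [] := by
    rintro rfl
    simp only [List.nil_append, List.head?_cons, Option.some.injEq] at hWh
    exact htopS (hWh ▸ hcS)
  obtain ⟨y, hy⟩ := Option.isSome_iff_exists.mp (List.isSome_head?.mpr ha)
  have hytop : y = top := by
    rw [head?_append_left hy] at hWh
    simpa using hWh
  rw [hytop] at hy
  have hlast_ct : (c :: t).getLast? = some bot := by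
    rw [List.getLast?_append] at hWl
    simpa using hWl
  unfold List.Chain' at hWc; rw [List.isChain_append] at hWc
  obtain ⟨hca, hcct, hbd⟩ := hWc
  -- split c :: t at first exit from S
  obtain ⟨P, rest, heq, hPne, hPS, hPm⟩ :=
    exit_split E S m hleave (c :: t) (by simp)
      (by intro u hu; simp only [List.head?_cons, Option.mem_def, Option.some.injEq] at hu
          exact hu ▸ hcS)
      (by intro b hb; rw [Option.mem_def, hlast_ct] at hb; cases hb; exact hbotS)
      hcct
  have hchain_mrest : List.Chain' E (m :: rest) := by
    have : List.Chain' E (P ++ m :: rest) := heq ▸ hcct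
    exact (List.isChain_append.mp this).2.1
  have hmrest_bot : (m :: rest).getLast? = some bot := by
    rw [heq, List.getLast?_append] at hlast_ct
    obtain ⟨b, hb⟩ := Option.isSome_iff_exists.mp (List.getLast?_isSome.mpr
      (show (m :: rest) ≠ [] by simp))
    rw [hb] at hlast_ct ⊢
    simpa using hlast_ct
  -- walk from x inside S whose last step goes to m
  obtain ⟨Q, hQne, hQh, hQl, hQc⟩ := exists_walk_of_rtg E (hreach x)
  obtain ⟨Q', rest', hQeq, hQ'ne, hQ'S, hQ'm⟩ :=
    exit_split E S m hleave Q hQne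
      (by intro u hu; rw [Option.mem_def, hQh] at hu; cases hu; exact hout x hEcx)
      (by intro b hb; rw [Option.mem_def, hQl] at hb; cases hb; exact hbotS)
      hQc
  have hQ'h : Q'.head? = some x := by
    rw [hQeq, List.head?_append] at hQh
    obtain ⟨z, hz⟩ := Option.isSome_iff_exists.mp (List.isSome_head?.mpr hQ'ne)
    rw [hz] at hQh ⊢
    simpa using hQh
  have hQ'c : List.Chain' E Q' := (List.isChain_append.mp (hQeq ▸ hQc)).1
  -- the new walk
  refine ⟨a ++ (c :: Q') ++ m :: rest, ⟨?_, ?_, ?_, ?_⟩, ?_, a, Q'.tail ++ m :: rest, ?_⟩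
  · simp [ha]
  · exact head?_append_left (head?_append_left hy)
  · exact getLast?_append_right hmrest_bot
  · unfold List.Chain'; rw [List.isChain_append]
    refine ⟨?_, hchain_mrest, ?_⟩
    · rw [List.isChain_append]
      refine ⟨hca, ?_, ?_⟩
      · rw [List.isChain_cons]
        refine ⟨?_, hQ'c⟩
        intro y hy'
        rw [Option.mem_def, hQ'h] at hy'; cases hy'; exact hEcx
      · intro u hu y hy'
        simp only [List.head?_cons, Option.mem_def, Option.some.injEq] at hy'
        subst hy'
        have := hbd u hu
        apply this
        simp
    · intro u hu y hy'
      simp only [List.head?_cons, Option.mem_def, Option.some.injEq] at hy'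
      subst hy'
      have hcons : (c :: Q').getLast? = Q'.getLast? := by
        obtain ⟨b, hb⟩ := Option.isSome_iff_exists.mp (List.getLast?_isSome.mpr hQ'ne)
        rw [show c :: Q' = [c] ++ Q' from rfl, List.getLast?_append, hb]; rfl
      rw [List.getLast?_append, Option.mem_def] at hu
      rw [hcons] at hu
      obtain ⟨b, hb⟩ := Option.isSome_iff_exists.mp (List.getLast?_isSome.mpr hQ'ne)
      rw [hb] at hu
      simp only [Option.some_or, Option.some.injEq] at hu
      subst hu
      exact hQ'm b hb
  · have hSfilt : ∀ L : List V, (∀ q ∈ L, q ∈ S) →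
        L.filter (fun v => decide (v ∈ Ev ∨ v = top ∨ v = bot)) = [] := by
      intro L hL
      rw [List.filter_eq_nil_iff]
      intro q hq
      simp only [hprS q (hL q hq), Bool.false_eq_true, not_false_iff]
    have h1 : (c :: Q').filter (fun v => decide (v ∈ Ev ∨ v = top ∨ v = bot)) = [] := by
      apply hSfilt
      intro q hq
      rcases List.mem_cons.mp hq with h | h
      · exact h ▸ hcS
      · exact hQ'S q h
    have h2 : P.filter (fun v => decide (v ∈ Ev ∨ v = top ∨ v = bot)) = [] := hSfilt P hPS
    rw [heq, List.filter_append, List.filter_append, List.filter_append, List.filter_append,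
      h1, h2]
    simp
  · obtain ⟨z, Q'', rfl⟩ := List.exists_cons_of_ne_nil hQ'ne
    simp only [List.head?_cons, Option.some.injEq] at hQ'h
    subst hQ'h
    simp
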